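/- Let n ≥ 1, let L̄ be a complex polynomial of degree exactly n, let k ∈ ℕ be such that L̄(j+k) ≠ 0 for every integer j ≥ 1, and set σ = inf_{j≥1} |L̄(j+k)|/jⁿ > 0. Let M(z, y₀,…,y_n) be holomorphic in a neighbourhood of the closed polydisk Δ̄ = { |z| ≤ r, |y₀| ≤ ρ, …, |y_n| ≤ ρ } (r, ρ > 0), and set μ = max_{Δ̄} |M|. Let ψ̂ = Σ_{j≥1} c_j z^j be the unique formal power series with zero constant term satisfying L̄(δ+k)ψ̂ = z·M(z, ψ̂, δψ̂, …, δⁿψ̂). Then ψ̂ converges in the disk of radius R = r·ρ/(ρ + μr/(σN)) centred at 0, where N = (n+1)^{n+1}/(n+2)^{n+2}; that is, Σ_{j≥1} |c_j| t^j < ∞ for every 0 < t < R. -/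

import Mathlib

open PowerSeries

/-- Euler derivative `δu = z·u'`: coefficientwise `(δu)_j = j·u_j`. -/
noncomputable def eulerD (u : PowerSeries ℂ) : PowerSeries ℂ :=
  PowerSeries.mk fun j => (j : ℂ) * PowerSeries.coeff j u

/-- Substitution of one-variable power series (with zero constant terms)
into a multivariate formal power series. -/
noncomputable def substSeries {m : ℕ} (F : MvPowerSeries (Fin m) ℂ)
    (u : Fin m → PowerSeries ℂ) : PowerSeries ℂ :=
  PowerSeries.mk fun j =>
    ∑' d : Fin m →₀ ℕ, MvPowerSeries.coeff d F *
      PowerSeries.coeff j (∏ i : Fin m, (u i) ^ (d i))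

/-- `F` is (the Taylor series at 0 of) a function holomorphic in a neighbourhood
of `0 ∈ ℂ^m`: absolute convergence on some polydisk of positive radius. -/
def ConvNearZero {m : ℕ} (F : MvPowerSeries (Fin m) ℂ) : Prop :=
  ∃ r : ℝ, 0 < r ∧ Summable fun d : Fin m →₀ ℕ =>
    ‖MvPowerSeries.coeff d F‖ * r ^ (d.sum fun _ v => v)

/-- Positive radius of convergence of a formal power series. -/
def PosRadius (u : PowerSeries ℂ) : Prop :=
  ∃ R : ℝ, 0 < R ∧ Summable fun j : ℕ => ‖PowerSeries.coeff j u‖ * R ^ j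

/-- The tuple `(z, φ, δφ, …, δⁿφ)` to be substituted into `F(z,y₀,…,y_n)`. -/
noncomputable def phiArgs (n : ℕ) (φ : PowerSeries ℂ) : Fin (n + 2) → PowerSeries ℂ :=
  fun i => if (i : ℕ) = 0 then PowerSeries.X else eulerD^[(i : ℕ) - 1] φ

/-- Formal partial derivative of a multivariate power series. -/
noncomputable def pderivMv {m : ℕ} (i : Fin m) (F : MvPowerSeries (Fin m) ℂ) :
    MvPowerSeries (Fin m) ℂ :=
  fun d => ((d i : ℂ) + 1) * MvPowerSeries.coeff (d + Finsupp.single i 1) F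


/-- The shifted Euler derivative `(δ + k) u`. -/
noncomputable def dshift (k : ℕ) (u : PowerSeries ℂ) : PowerSeries ℂ :=
  eulerD u + (k : ℂ) • u

/-- `L̄(δ+k)u = Σᵢ bᵢ (δ+k)ⁱ u` for a polynomial `L̄(ξ) = Σᵢ bᵢ ξⁱ`. -/
noncomputable def LpolyOp (L : Polynomial ℂ) (k : ℕ) (u : PowerSeries ℂ) : PowerSeries ℂ :=
  ∑ i ∈ Finset.range (L.natDegree + 1), L.coeff i • (dshift k)^[i] u

/-- The sum of a multivariate power series at a point. -/
noncomputable def evalMv {m : ℕ} (F : MvPowerSeries (Fin m) ℂ) (x : Fin m → ℂ) : ℂ :=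
  ∑' d : Fin m →₀ ℕ, MvPowerSeries.coeff d F * ∏ i : Fin m, x i ^ d i


section Aux
open PowerSeries Filter


lemma maj_coeff_mul {l : ℕ} {f g : PowerSeries ℂ} {p q : PowerSeries ℝ}
    (hf : ∀ i ≤ l, ‖coeff i f‖ ≤ coeff i p)
    (hg : ∀ i ≤ l, ‖coeff i g‖ ≤ coeff i q) :
    ∀ i ≤ l, ‖coeff i (f * g)‖ ≤ coeff i (p * q) := by
  intro i hi
  rw [coeff_mul, coeff_mul]
  refine (norm_sum_le _ _).trans (Finset.sum_le_sum ?_)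
  rintro ⟨a, b⟩ hx
  rw [Finset.HasAntidiagonal.mem_antidiagonal] at hx
  have ha : a ≤ l := le_trans (by omega) hi
  have hb : b ≤ l := le_trans (by omega) hi
  rw [norm_mul]
  exact mul_le_mul (hf a ha) (hg b hb) (norm_nonneg _)
    (le_trans (norm_nonneg _) (hf a ha))

lemma maj_coeff_pow {l : ℕ} {f : PowerSeries ℂ} {p : PowerSeries ℝ}
    (hf : ∀ i ≤ l, ‖coeff i f‖ ≤ coeff i p) (m : ℕ) :
    ∀ i ≤ l, ‖coeff i (f ^ m)‖ ≤ coeff i (p ^ m) := by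
  induction m with
  | zero =>
    intro i _
    simp only [pow_zero, coeff_one]
    split <;> simp
  | succ m ih =>
    rw [pow_succ, pow_succ]
    exact maj_coeff_mul ih hf

lemma maj_coeff_prod {l : ℕ} {ι : Type*} [DecidableEq ι] (s : Finset ι)
    (F : ι → PowerSeries ℂ) (P : ι → PowerSeries ℝ)
    (h : ∀ j ∈ s, ∀ i ≤ l, ‖coeff i (F j)‖ ≤ coeff i (P j)) :
    ∀ i ≤ l, ‖coeff i (∏ j ∈ s, F j)‖ ≤ coeff i (∏ j ∈ s, P j) := by
  induction s using Finset.induction with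
  | empty =>
    intro i _
    simp only [Finset.prod_empty, coeff_one]
    split <;> simp
  | insert _ _ hnot ih =>
    rename_i a s
    rw [Finset.prod_insert hnot, Finset.prod_insert hnot]
    exact maj_coeff_mul (h a (Finset.mem_insert_self a s))
      (ih fun j hj => h j (Finset.mem_insert_of_mem hj))

lemma coeff_pow_eq_zero_of_lt {R : Type*} [CommRing R] {f : PowerSeries R}
    (hf : constantCoeff f = 0) {m l : ℕ} (h : l < m) : coeff l (f ^ m) = 0 := by
  induction m generalizing l with
  | zero => omega
  | succ m ih =>
    rw [pow_succ, coeff_mul]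
    refine Finset.sum_eq_zero ?_
    rintro ⟨a, b⟩ hx
    rw [Finset.HasAntidiagonal.mem_antidiagonal] at hx
    by_cases hab : a < m
    · rw [ih hab, zero_mul]
    · have hb : b = 0 := by omega
      subst hb
      rw [coeff_zero_eq_constantCoeff, hf, mul_zero]

lemma coeff_prod_pow_eq_zero_of_lt {R : Type*} [CommRing R] {ι : Type*} [DecidableEq ι]
    (s : Finset ι) (u : ι → PowerSeries R) (d : ι → ℕ)
    (hu : ∀ j ∈ s, constantCoeff (u j) = 0) {l : ℕ} (h : l < ∑ j ∈ s, d j) :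
    coeff l (∏ j ∈ s, (u j) ^ (d j)) = 0 := by
  induction s using Finset.induction generalizing l with
  | empty => simp at h
  | insert _ _ hnot ih =>
    rename_i a s
    rw [Finset.prod_insert hnot, coeff_mul]
    rw [Finset.sum_insert hnot] at h
    refine Finset.sum_eq_zero ?_
    rintro ⟨x, y⟩ hx
    rw [Finset.HasAntidiagonal.mem_antidiagonal] at hx
    by_cases hxa : x < d a
    · rw [coeff_pow_eq_zero_of_lt (hu a (Finset.mem_insert_self a s)) hxa, zero_mul]
    · have : y < ∑ j ∈ s, d j := by omega
      rw [ih (fun j hj => hu j (Finset.mem_insert_of_mem hj)) this, mul_zero]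

lemma coeff_pow_congr {R : Type*} [CommRing R] {l : ℕ} {A B : PowerSeries R}
    (h : ∀ i ≤ l, coeff i A = coeff i B) (m : ℕ) :
    ∀ i ≤ l, coeff i (A ^ m) = coeff i (B ^ m) := by
  induction m with
  | zero => intros; rfl
  | succ m ih =>
    intro i hi
    rw [pow_succ, pow_succ, coeff_mul, coeff_mul]
    refine Finset.sum_congr rfl ?_
    rintro ⟨a, b⟩ hx
    rw [Finset.HasAntidiagonal.mem_antidiagonal] at hx
    rw [ih a (le_trans (by omega) hi), h b (le_trans (by omega) hi)]


lemma coeff_mul_nonneg' {p q : PowerSeries ℝ} (hp : ∀ i, 0 ≤ coeff i p)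
    (hq : ∀ i, 0 ≤ coeff i q) : ∀ l, 0 ≤ coeff l (p * q) := by
  intro l
  rw [coeff_mul]
  exact Finset.sum_nonneg fun x _ => mul_nonneg (hp _) (hq _)

lemma coeff_pow_nonneg' {p : PowerSeries ℝ} (hp : ∀ i, 0 ≤ coeff i p) (m : ℕ) :
    ∀ l, 0 ≤ coeff l (p ^ m) := by
  induction m with
  | zero => intro l; rw [pow_zero, coeff_one]; split <;> norm_num
  | succ m ih => rw [pow_succ]; exact coeff_mul_nonneg' ih hp

lemma sum_coeff_mul_le (p q : PowerSeries ℝ) (hp : ∀ i, 0 ≤ coeff i p)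
    (hq : ∀ i, 0 ≤ coeff i q) (t : ℝ) (ht : 0 ≤ t) (J : ℕ) :
    ∑ l ∈ Finset.range J, coeff l (p * q) * t ^ l ≤
      (∑ l ∈ Finset.range J, coeff l p * t ^ l) *
      (∑ l ∈ Finset.range J, coeff l q * t ^ l) := by
  rw [Finset.sum_mul_sum]
  have hL : ∀ l, coeff l (p * q) * t ^ l =
      ∑ x ∈ Finset.HasAntidiagonal.antidiagonal l, (coeff x.1 p * t ^ x.1) * (coeff x.2 q * t ^ x.2) := by
    intro l
    rw [coeff_mul, Finset.sum_mul]
    refine Finset.sum_congr rfl ?_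
    rintro ⟨a, b⟩ hx
    rw [Finset.HasAntidiagonal.mem_antidiagonal] at hx
    subst hx
    rw [pow_add]
    ring
  calc ∑ l ∈ Finset.range J, coeff l (p * q) * t ^ l
      = ∑ l ∈ Finset.range J, ∑ x ∈ Finset.HasAntidiagonal.antidiagonal l,
          (coeff x.1 p * t ^ x.1) * (coeff x.2 q * t ^ x.2) := by
        exact Finset.sum_congr rfl fun l _ => hL l
    _ = ∑ x ∈ (Finset.range J).biUnion Finset.HasAntidiagonal.antidiagonal,
          (coeff x.1 p * t ^ x.1) * (coeff x.2 q * t ^ x.2) := by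
        rw [Finset.sum_biUnion]
        intro l₁ _ l₂ _ hne
        simp only [Function.onFun]
        rw [Finset.disjoint_left]
        intro x hx1 hx2
        rw [Finset.HasAntidiagonal.mem_antidiagonal] at hx1 hx2
        exact hne (by omega)
    _ ≤ ∑ x ∈ Finset.range J ×ˢ Finset.range J,
          (coeff x.1 p * t ^ x.1) * (coeff x.2 q * t ^ x.2) := by
        refine Finset.sum_le_sum_of_subset_of_nonneg ?_ ?_
        · intro x hx
          rw [Finset.mem_biUnion] at hx
          obtain ⟨l, hl, hx⟩ := hx
          rw [Finset.HasAntidiagonal.mem_antidiagonal] at hx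
          rw [Finset.mem_range] at hl
          rw [Finset.mem_product, Finset.mem_range, Finset.mem_range]
          omega
        · intro x _ _
          exact mul_nonneg (mul_nonneg (hp _) (pow_nonneg ht _))
            (mul_nonneg (hq _) (pow_nonneg ht _))
    _ = ∑ a ∈ Finset.range J, ∑ b ∈ Finset.range J,
          (coeff a p * t ^ a) * (coeff b q * t ^ b) := Finset.sum_product _ _ _
  
lemma sum_coeff_pow_le (p : PowerSeries ℝ) (hp : ∀ i, 0 ≤ coeff i p)
    (t : ℝ) (ht : 0 ≤ t) (J m : ℕ) :
    ∑ l ∈ Finset.range J, coeff l (p ^ m) * t ^ l ≤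
      (∑ l ∈ Finset.range J, coeff l p * t ^ l) ^ m := by
  induction m with
  | zero =>
    simp only [pow_zero]
    have : ∀ l, coeff l (1 : PowerSeries ℝ) * t ^ l = if l = 0 then 1 else 0 := by
      intro l
      rw [coeff_one]
      split <;> simp_all
    rw [Finset.sum_congr rfl fun l _ => this l]
    rw [Finset.sum_ite_eq' (Finset.range J) 0 (fun _ => (1:ℝ))]
    split <;> norm_num
  | succ m ih =>
    rw [pow_succ, pow_succ]
    calc ∑ l ∈ Finset.range J, coeff l (p ^ m * p) * t ^ l
        ≤ (∑ l ∈ Finset.range J, coeff l (p ^ m) * t ^ l) *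
          (∑ l ∈ Finset.range J, coeff l p * t ^ l) := by
          exact sum_coeff_mul_le _ _ (coeff_pow_nonneg' hp m) hp t ht J
      _ ≤ _ := by
          refine mul_le_mul_of_nonneg_right ih ?_
          exact Finset.sum_nonneg fun l _ => mul_nonneg (hp _) (pow_nonneg ht _)

lemma geom_partial_le {x : ℝ} (h0 : 0 ≤ x) (h1 : x < 1) (J : ℕ) :
    ∑ l ∈ Finset.range J, x ^ l ≤ (1 - x)⁻¹ := by
  have h2 : (0:ℝ) < 1 - x := by linarith
  rw [geom_sum_eq (ne_of_lt h1)]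
  rw [div_le_iff_of_neg (by linarith : x - 1 < 0)]
  have : x ^ J ≥ 0 := pow_nonneg h0 J
  have h3 : (1 - x)⁻¹ * (1 - x) = 1 := inv_mul_cancel₀ (ne_of_gt h2)
  nlinarith [inv_nonneg.mpr (le_of_lt h2)]

lemma sum_coeff_X_pow_le (s : ℕ) (t : ℝ) (ht : 0 ≤ t) (J : ℕ) :
    ∑ l ∈ Finset.range J, coeff l ((X : PowerSeries ℝ) ^ s) * t ^ l ≤ t ^ s := by
  have : ∀ l, coeff l ((X : PowerSeries ℝ) ^ s) * t ^ l
      = if l = s then t ^ s else 0 := by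
    intro l
    rw [coeff_X_pow]
    split <;> simp_all
  rw [Finset.sum_congr rfl fun l _ => this l]
  rw [Finset.sum_ite_eq' (Finset.range J) s (fun _ => t ^ s)]
  split
  · exact le_refl _
  · exact pow_nonneg ht s

lemma coeff_X_pow_nonneg (s : ℕ) : ∀ i, 0 ≤ coeff i ((X : PowerSeries ℝ) ^ s) := by
  intro i
  rw [coeff_X_pow]
  split <;> norm_num

lemma eval_div_tendsto (n : ℕ) (L : Polynomial ℂ) (hdeg : L.natDegree = n) (k : ℕ) :
    Tendsto (fun j : ℕ => L.eval ((j + 1 + k : ℕ) : ℂ) / ((j + 1 : ℕ) : ℂ) ^ n)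
      atTop (nhds (L.coeff n)) := by
  have hinv : Tendsto (fun j : ℕ => (((j + 1 : ℕ) : ℂ))⁻¹) atTop (nhds 0) := by
    have h1 : Tendsto (fun j : ℕ => (1 : ℝ) / ((j : ℝ) + 1)) atTop (nhds 0) :=
      tendsto_one_div_add_atTop_nhds_zero_nat
    have h2 := (Complex.continuous_ofReal.tendsto 0).comp h1
    simp only [Complex.ofReal_zero] at h2
    convert h2 using 2 with j
    simp only [Function.comp_apply, one_div, Complex.ofReal_inv]
    push_cast
    ring
  have hratio : Tendsto (fun j : ℕ => ((j + 1 + k : ℕ) : ℂ) / ((j + 1 : ℕ) : ℂ))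
      atTop (nhds 1) := by
    have heq : (fun j : ℕ => ((j + 1 + k : ℕ) : ℂ) / ((j + 1 : ℕ) : ℂ))
        = fun j : ℕ => 1 + (k : ℂ) * (((j + 1 : ℕ) : ℂ))⁻¹ := by
      funext j
      have hne : ((j + 1 : ℕ) : ℂ) ≠ 0 := Nat.cast_ne_zero.mpr (by omega)
      have hsplit : ((j + 1 + k : ℕ) : ℂ) = ((j + 1 : ℕ) : ℂ) + k := by push_cast; ring
      rw [hsplit, add_div, div_self hne, div_eq_mul_inv]
    rw [heq]
    have := (tendsto_const_nhds (x := (1:ℂ)) (f := atTop)).add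
      ((tendsto_const_nhds (x := (k:ℂ)) (f := atTop)).mul hinv)
    simpa using this
  have key : ∀ i ∈ Finset.range (n + 1),
      Tendsto (fun j : ℕ => L.coeff i * ((j + 1 + k : ℕ) : ℂ) ^ i / ((j + 1 : ℕ) : ℂ) ^ n)
        atTop (nhds (if i = n then L.coeff n else 0)) := by
    intro i hi
    rw [Finset.mem_range] at hi
    have hi' : i ≤ n := by omega
    have heq : (fun j : ℕ => L.coeff i * ((j + 1 + k : ℕ) : ℂ) ^ i / ((j + 1 : ℕ) : ℂ) ^ n)
        = fun j : ℕ => L.coeff i * ((((j + 1 + k : ℕ) : ℂ) / ((j + 1 : ℕ) : ℂ)) ^ i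
            * ((((j + 1 : ℕ) : ℂ))⁻¹) ^ (n - i)) := by
      funext j
      rw [div_pow, inv_pow, ← one_div, div_mul_div_comm, mul_one, ← pow_add,
        Nat.add_sub_cancel' hi', mul_div_assoc]
    rw [heq]
    have hlim := (tendsto_const_nhds (x := L.coeff i) (f := atTop)).mul
      ((hratio.pow i).mul (hinv.pow (n - i)))
    by_cases hin : i = n
    · subst hin
      simpa [Nat.sub_self] using hlim
    · have hni : n - i ≠ 0 := by omega
      rw [if_neg hin]
      have : (1 : ℂ) ^ i * (0 : ℂ) ^ (n - i) = 0 := by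
        rw [zero_pow hni, mul_zero]
      rw [← mul_zero (L.coeff i)]
      convert hlim using 2
      rw [this]
  have hsum := tendsto_finset_sum (Finset.range (n + 1)) key
  have heval : (fun j : ℕ => L.eval ((j + 1 + k : ℕ) : ℂ) / ((j + 1 : ℕ) : ℂ) ^ n)
      = fun j : ℕ => ∑ i ∈ Finset.range (n + 1),
          L.coeff i * ((j + 1 + k : ℕ) : ℂ) ^ i / ((j + 1 : ℕ) : ℂ) ^ n := by
    funext j
    rw [Polynomial.eval_eq_sum_range ((j + 1 + k : ℕ) : ℂ), hdeg, Finset.sum_div]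
  rw [heval]
  convert hsum using 1
  rw [Finset.sum_ite_eq' (Finset.range (n + 1)) n fun _ => L.coeff n]
  simp

lemma sigma_pos (n : ℕ) (L : Polynomial ℂ) (hdeg : L.degree = (n : ℕ)) (k : ℕ)
    (hLk : ∀ j : ℕ, 1 ≤ j → L.eval ((j + k : ℕ) : ℂ) ≠ 0) (σ : ℝ)
    (hσ : σ = ⨅ j : ℕ, ‖L.eval ((j + 1 + k : ℕ) : ℂ)‖ / ((j + 1 : ℕ) : ℝ) ^ n) :
    0 < σ ∧ ∀ j : ℕ, 1 ≤ j → σ * (j : ℝ) ^ n ≤ ‖L.eval ((j + k : ℕ) : ℂ)‖ := by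
  set F : ℕ → ℝ := fun j => ‖L.eval ((j + 1 + k : ℕ) : ℂ)‖ / ((j + 1 : ℕ) : ℝ) ^ n with hF
  have hFpos : ∀ j, 0 < F j := by
    intro j
    refine div_pos ?_ (by positivity)
    rw [norm_pos_iff]
    exact hLk (j + 1) (by omega)
  have hndeg : L.natDegree = n := Polynomial.natDegree_eq_of_degree_eq_some hdeg
  have hlc : L.coeff n ≠ 0 := by
    rw [← hndeg]
    exact Polynomial.leadingCoeff_ne_zero.mpr (fun h => by simp [h] at hdeg)
  have htendC := eval_div_tendsto n L hndeg k
  have htend : Tendsto F atTop (nhds ‖L.coeff n‖) := by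
    have := htendC.norm
    convert this using 2 with j
    rw [hF]
    simp only [norm_div, norm_pow, Complex.norm_natCast]
  have hc : (0:ℝ) < ‖L.coeff n‖ := norm_pos_iff.mpr hlc
  have hev : ∀ᶠ j in atTop, ‖L.coeff n‖ / 2 ≤ F j :=
    htend.eventually (eventually_ge_nhds (by linarith))
  obtain ⟨J, hJ⟩ := hev.exists_forall_of_atTop
  -- lower bound for all j
  set c : ℝ := min (‖L.coeff n‖ / 2) (((Finset.range (J + 1)).image F).min'
    (by simp)) with hcdef
  have hcpos : 0 < c := by
    refine lt_min (by linarith) ?_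
    have := Finset.min'_mem (((Finset.range (J + 1)).image F)) (by simp)
    rw [Finset.mem_image] at this
    obtain ⟨j, _, hj⟩ := this
    rw [← hj]
    exact hFpos j
  have hlow : ∀ j, c ≤ F j := by
    intro j
    by_cases hj : j ≤ J
    · refine le_trans (min_le_right _ _) ?_
      refine Finset.min'_le _ _ ?_
      rw [Finset.mem_image]
      exact ⟨j, by rw [Finset.mem_range]; omega, rfl⟩
    · exact le_trans (min_le_left _ _) (hJ j (by omega))
  have hσc : c ≤ σ := by
    rw [hσ]
    exact le_ciInf hlow
  have hσpos : 0 < σ := lt_of_lt_of_le hcpos hσc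
  refine ⟨hσpos, ?_⟩
  intro j hj
  have hle : σ ≤ F (j - 1) := by
    rw [hσ]
    exact ciInf_le ⟨0, fun x ⟨i, hi⟩ => hi ▸ le_of_lt (hFpos i)⟩ (j - 1)
  have hjj : j - 1 + 1 = j := by omega
  rw [hF] at hle
  simp only [hjj] at hle
  have hpow : (0:ℝ) < ((j : ℕ) : ℝ) ^ n := by
    have : (0:ℝ) < (j:ℝ) := by exact_mod_cast hj
    positivity
  calc σ * (j : ℝ) ^ n ≤ (‖L.eval ((j + k : ℕ) : ℂ)‖ / ((j : ℕ) : ℝ) ^ n) * (j : ℝ) ^ n := by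
        apply mul_le_mul_of_nonneg_right _ (le_of_lt hpow)
        exact_mod_cast hle
    _ = ‖L.eval ((j + k : ℕ) : ℂ)‖ := by
        field_simp
lemma cauchy_estimate {q : ℕ} (F : MvPowerSeries (Fin q) ℂ) (x : Fin q → ℝ)
    (hx : ∀ i, 0 ≤ x i)
    (hsum : Summable fun d : Fin q →₀ ℕ =>
      ‖MvPowerSeries.coeff d F‖ * ∏ i : Fin q, x i ^ d i)
    (μ : ℝ) (hb : ∀ y : Fin q → ℂ, (∀ i, ‖y i‖ ≤ x i) → ‖evalMv F y‖ ≤ μ)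
    (d₀ : Fin q →₀ ℕ) :
    ‖MvPowerSeries.coeff d₀ F‖ * ∏ i : Fin q, x i ^ d₀ i ≤ μ := by
  classical
  set g : (Fin q →₀ ℕ) → ℝ :=
    fun d => ‖MvPowerSeries.coeff d F‖ * ∏ i : Fin q, x i ^ d i with hgdef
  have hgnn : ∀ d, 0 ≤ g d := fun d =>
    mul_nonneg (norm_nonneg _) (Finset.prod_nonneg fun i _ => pow_nonneg (hx i) _)
  have hnormeq : ∀ d : Fin q →₀ ℕ,
      ‖MvPowerSeries.coeff d F * ∏ i : Fin q, ((x i : ℂ)) ^ d i‖ = g d := by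
    intro d
    rw [norm_mul, norm_prod]
    congr 1
    refine Finset.prod_congr rfl fun i _ => ?_
    rw [norm_pow, Complex.norm_real, Real.norm_of_nonneg (hx i)]
  refine le_of_forall_pos_le_add ?_
  intro ε hε
  -- choose a finite set T capturing all but ε of the mass
  have htail := tendsto_tsum_compl_atTop_zero g
  have hev : ∀ᶠ T : Finset (Fin q →₀ ℕ) in Filter.atTop,
      (∑' d : {d : Fin q →₀ ℕ // d ∉ T}, g d) < ε :=
    htail.eventually_lt_const hε
  obtain ⟨T, hT⟩ := hev.exists
  set S : (Fin q →₀ ℕ) → ℕ := fun d => ∑ i : Fin q, d i with hSdef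
  set N : ℕ := T.sup S + S d₀ + 1 with hNdef
  have hNpos : 0 < N := by omega
  set ω : ℂ := Complex.exp (2 * Real.pi * Complex.I / N) with hωdef
  have hprim : IsPrimitiveRoot ω N := Complex.isPrimitiveRoot_exp N (by omega)
  have hωN : ω ^ N = 1 := hprim.pow_eq_one
  have hωne : ω ≠ 0 := by
    intro h
    rw [h, zero_pow (by omega)] at hωN
    exact zero_ne_one hωN
  have hnorm : ‖ω‖ = 1 := by
    have h1 : ‖ω‖ ^ N = 1 := by rw [← norm_pow, hωN, norm_one]
    have h0 : (0:ℝ) ≤ ‖ω‖ := norm_nonneg _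
    rcases lt_trichotomy ‖ω‖ 1 with h | h | h
    · exact absurd h1 (by nlinarith [pow_lt_one₀ h0 h (by omega : N ≠ 0)])
    · exact h
    · exact absurd h1 (by nlinarith [one_lt_pow₀ h (by omega : N ≠ 0)])
  -- the character factors
  set ξ : Fin q → (Fin q →₀ ℕ) → ℂ := fun i d => ω ^ d i * (ω ^ d₀ i)⁻¹ with hξdef
  have hξnorm : ∀ i d, ‖ξ i d‖ = 1 := by
    intro i d
    rw [hξdef]
    simp only [norm_mul, norm_inv, norm_pow, hnorm, one_pow, inv_one, mul_one]
  have hξN : ∀ i d, (ξ i d) ^ N = 1 := by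
    intro i d
    rw [hξdef]
    simp only [mul_pow, inv_pow, ← pow_mul]
    rw [mul_comm (d i) N, mul_comm (d₀ i) N, pow_mul, pow_mul, hωN, one_pow, one_pow,
      inv_one, mul_one]
  -- twisted evaluation points
  set K : Finset (Fin q → ℕ) := Fintype.piFinset (fun _ : Fin q => Finset.range N) with hKdef
  set y : (Fin q → ℕ) → (Fin q → ℂ) := fun kk i => ω ^ (kk i) * (x i : ℂ) with hydef
  have hynorm : ∀ kk i, ‖y kk i‖ = x i := by
    intro kk i
    rw [hydef]
    simp only [norm_mul, norm_pow, hnorm, one_pow, one_mul, Complex.norm_real,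
      Real.norm_of_nonneg (hx i)]
  set c : (Fin q → ℕ) → ℂ := fun kk => ∏ i : Fin q, ((ω ^ d₀ i) ^ (kk i))⁻¹ with hcdef
  have hcnorm : ∀ kk, ‖c kk‖ = 1 := by
    intro kk
    rw [hcdef, norm_prod]
    refine Finset.prod_eq_one fun i _ => ?_
    rw [norm_inv, norm_pow, norm_pow, hnorm, one_pow, one_pow, inv_one]
  set e : (Fin q → ℕ) → (Fin q →₀ ℕ) → ℂ := fun kk d => ∏ i : Fin q, (ξ i d) ^ (kk i)
    with hedef
  have henorm : ∀ kk d, ‖e kk d‖ = 1 := by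
    intro kk d
    rw [hedef, norm_prod]
    exact Finset.prod_eq_one fun i _ => by rw [norm_pow, hξnorm, one_pow]
  -- pointwise product identity
  have hpoint : ∀ kk d,
      MvPowerSeries.coeff d F * (∏ i : Fin q, (y kk i) ^ d i) * c kk
        = (MvPowerSeries.coeff d F * ∏ i : Fin q, ((x i : ℂ)) ^ d i) * e kk d := by
    intro kk d
    simp only [hydef, hcdef, hedef, hξdef]
    have key : ∀ i : Fin q, (ω ^ kk i * (x i : ℂ)) ^ d i * ((ω ^ d₀ i) ^ kk i)⁻¹
        = ((x i : ℂ)) ^ d i * (ω ^ d i * (ω ^ d₀ i)⁻¹) ^ kk i := by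
      intro i
      have hsw : (ω ^ kk i) ^ d i = (ω ^ d i) ^ kk i := by
        rw [← pow_mul, ← pow_mul, mul_comm]
      rw [mul_pow, hsw, mul_pow (ω ^ d i), inv_pow]
      ring
    rw [mul_assoc, ← Finset.prod_mul_distrib, Finset.prod_congr rfl (fun i _ => key i),
      Finset.prod_mul_distrib, ← mul_assoc]
  -- summability of the twisted families
  have hsummand : ∀ kk : Fin q → ℕ, Summable (fun d : Fin q →₀ ℕ =>
      (MvPowerSeries.coeff d F * ∏ i : Fin q, ((x i : ℂ)) ^ d i) * e kk d) := by
    intro kk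
    refine Summable.of_norm ?_
    have : (fun d : Fin q →₀ ℕ =>
        ‖(MvPowerSeries.coeff d F * ∏ i : Fin q, ((x i : ℂ)) ^ d i) * e kk d‖) = g := by
      funext d
      rw [norm_mul, henorm, mul_one, hnormeq]
    rw [this]
    exact hsum
  -- the average
  set A : ℂ := ((N:ℂ))⁻¹ ^ q * ∑ kk ∈ K, evalMv F (y kk) * c kk with hAdef
  have hKcard : K.card = N ^ q := by
    rw [hKdef, Fintype.card_piFinset]
    simp [Finset.card_range]
  have hAnorm : ‖A‖ ≤ μ := by
    have h1 : ‖∑ kk ∈ K, evalMv F (y kk) * c kk‖ ≤ (N:ℝ) ^ q * μ := by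
      refine (norm_sum_le _ _).trans ?_
      have h2 : ∀ kk ∈ K, ‖evalMv F (y kk) * c kk‖ ≤ μ := by
        intro kk _
        rw [norm_mul, hcnorm, mul_one]
        exact hb (y kk) (fun i => le_of_eq (hynorm kk i))
      calc ∑ kk ∈ K, ‖evalMv F (y kk) * c kk‖ ≤ ∑ _kk ∈ K, μ := Finset.sum_le_sum h2
        _ = (N:ℝ) ^ q * μ := by rw [Finset.sum_const, hKcard]; push_cast; ring
    rw [hAdef, norm_mul, norm_pow, norm_inv, Complex.norm_natCast]
    calc ((N:ℝ))⁻¹ ^ q * ‖∑ kk ∈ K, evalMv F (y kk) * c kk‖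
        ≤ ((N:ℝ))⁻¹ ^ q * ((N:ℝ) ^ q * μ) := by
          refine mul_le_mul_of_nonneg_left h1 (by positivity)
      _ = μ := by
          rw [← mul_assoc, ← mul_pow, inv_mul_cancel₀ (by positivity : (N:ℝ) ≠ 0)]
          simp
  -- compute A as a tsum
  have hA : A = ∑' d : Fin q →₀ ℕ,
      (MvPowerSeries.coeff d F * ∏ i : Fin q, ((x i : ℂ)) ^ d i)
        * (((N:ℂ))⁻¹ ^ q * ∑ kk ∈ K, e kk d) := by
    rw [hAdef]
    have h1 : ∀ kk ∈ K, evalMv F (y kk) * c kk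
        = ∑' d : Fin q →₀ ℕ,
            (MvPowerSeries.coeff d F * ∏ i : Fin q, ((x i : ℂ)) ^ d i) * e kk d := by
      intro kk _
      rw [evalMv, ← tsum_mul_right]
      exact tsum_congr fun d => hpoint kk d
    rw [Finset.sum_congr rfl h1, ← Summable.tsum_finsetSum (fun kk _ => hsummand kk)]
    rw [← tsum_mul_left]
    refine tsum_congr fun d => ?_
    rw [← Finset.mul_sum]
    ring
  -- evaluate the character sum
  have hchar : ∀ d : Fin q →₀ ℕ,
      ((N:ℂ))⁻¹ ^ q * ∑ kk ∈ K, e kk d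
        = if (∀ i, ξ i d = 1) then 1 else 0 := by
    intro d
    have hsum1 : ∑ kk ∈ K, e kk d = ∏ i : Fin q, ∑ cc ∈ Finset.range N, (ξ i d) ^ cc := by
      rw [hedef, hKdef, Finset.prod_univ_sum]
    rw [hsum1]
    by_cases hall : ∀ i, ξ i d = 1
    · rw [if_pos hall]
      have : ∀ i : Fin q, ∑ cc ∈ Finset.range N, (ξ i d) ^ cc = (N:ℂ) := by
        intro i
        rw [hall i]
        simp
      rw [Finset.prod_congr rfl (fun i _ => this i), Finset.prod_const]
      simp only [Finset.card_univ, Fintype.card_fin]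
      rw [← mul_pow, inv_mul_cancel₀ (Nat.cast_ne_zero.mpr (by omega) : (N:ℂ) ≠ 0), one_pow]
    · rw [if_neg hall]
      push_neg at hall
      obtain ⟨i₀, hi₀⟩ := hall
      have hzero : ∑ cc ∈ Finset.range N, (ξ i₀ d) ^ cc = 0 := by
        rw [geom_sum_eq hi₀, hξN, sub_self, zero_div]
      rw [Finset.prod_eq_zero (Finset.mem_univ i₀) hzero, mul_zero]
  -- hence A is the sum of the congruent coefficients
  set h : (Fin q →₀ ℕ) → ℂ := fun d => if (∀ i, ξ i d = 1)
    then MvPowerSeries.coeff d F * ∏ i : Fin q, ((x i : ℂ)) ^ d i else 0 with hhdef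
  have hAh : A = ∑' d, h d := by
    rw [hA]
    refine tsum_congr fun d => ?_
    rw [hchar d]
    simp only [hhdef]
    split
    · rw [mul_one]
    · rw [mul_zero]
  -- h at d₀
  have hd₀cond : ∀ i, ξ i d₀ = 1 := by
    intro i
    rw [hξdef]
    exact mul_inv_cancel₀ (pow_ne_zero _ hωne)
  have hhd₀ : h d₀ = MvPowerSeries.coeff d₀ F * ∏ i : Fin q, ((x i : ℂ)) ^ d₀ i := by
    simp only [hhdef]
    exact if_pos hd₀cond
  -- congruent d ≠ d₀ are far away, hence outside T
  have hfar : ∀ d : Fin q →₀ ℕ, d ≠ d₀ → (∀ i, ξ i d = 1) → d ∉ T := by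
    intro d hne hall hdT
    have hdvd : ∀ i, (N:ℤ) ∣ (d i : ℤ) - (d₀ i : ℤ) := by
      intro i
      have h1 : ω ^ (d i) = ω ^ (d₀ i) := by
        have := hall i
        rw [hξdef] at this
        field_simp at this
        exact this
      have h2 : ω ^ ((d i : ℤ) - (d₀ i : ℤ)) = 1 := by
        rw [zpow_sub₀ hωne, zpow_natCast, zpow_natCast, h1]
        exact mul_inv_cancel₀ (pow_ne_zero _ hωne)
      exact (hprim.zpow_eq_one_iff_dvd _).mp h2
    have hex : ∃ i, d i ≠ d₀ i := by
      by_contra hc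
      push_neg at hc
      exact hne (Finsupp.ext hc)
    obtain ⟨i, hi⟩ := hex
    have h3 := hdvd i
    have h4 : (N:ℤ) ≤ |(d i : ℤ) - (d₀ i : ℤ)| := by
      refine Int.le_of_dvd ?_ ((dvd_abs _ _).mpr h3)
      rw [abs_pos]
      intro hcon
      exact hi (by omega)
    have h5 : d i ≤ S d := Finset.single_le_sum (fun j _ => Nat.zero_le _) (Finset.mem_univ i)
    have h6 : S d ≤ T.sup S := Finset.le_sup hdT
    have h7 : d₀ i ≤ S d₀ := Finset.single_le_sum (fun j _ => Nat.zero_le _) (Finset.mem_univ i)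
    rw [hNdef] at h4
    rcases abs_cases ((d i : ℤ) - (d₀ i : ℤ)) with h8 | h8 <;> rw [h8.1] at h4 <;> omega
  -- split off d₀
  set h' : (Fin q →₀ ℕ) → ℂ := fun d => if d = d₀ then 0 else h d with hh'def
  have hh'bound : ∀ d, ‖h' d‖ ≤ Set.indicator {d : Fin q →₀ ℕ | d ∉ T} g d := by
    intro d
    by_cases hdd : d = d₀
    · have hz : h' d = 0 := by simp only [hh'def]; rw [if_pos hdd]
      rw [hz, norm_zero]
      exact Set.indicator_nonneg (fun d _ => hgnn d) _
    · have hz : h' d = h d := by simp only [hh'def]; rw [if_neg hdd]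
      rw [hz]
      by_cases hdT : d ∈ T
      · have : h d = 0 := by
          simp only [hhdef]
          rw [if_neg]
          intro hall
          exact hfar d hdd hall hdT
        rw [this, norm_zero]
        exact Set.indicator_nonneg (fun d _ => hgnn d) _
      · rw [Set.indicator_of_mem (by exact hdT : d ∈ {d : Fin q →₀ ℕ | d ∉ T})]
        simp only [hhdef]
        split
        · rw [hnormeq]
        · rw [norm_zero]; exact hgnn d
  have hgind_summable : Summable (Set.indicator {d : Fin q →₀ ℕ | d ∉ T} g) :=
    hsum.indicator _
  have hh'summable : Summable h' :=
    Summable.of_norm (Summable.of_nonneg_of_le (fun d => norm_nonneg _) hh'bound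
      hgind_summable)
  have hsplit : A = h d₀ + ∑' d, h' d := by
    rw [hAh]
    have hs1 : Summable (fun d : Fin q →₀ ℕ => if d = d₀ then h d₀ else 0) :=
      summable_of_ne_finset_zero (s := {d₀}) (fun d hd => by
        simp at hd
        simp [hd])
    have hs2 : ∑' d, h d = (∑' d : Fin q →₀ ℕ, if d = d₀ then h d₀ else 0)
        + ∑' d, h' d := by
      rw [← Summable.tsum_add hs1 hh'summable]
      refine tsum_congr fun d => ?_
      by_cases hdd : d = d₀
      · subst hdd; simp [hh'def]
      · simp [hh'def, hdd]
    rw [hs2, tsum_ite_eq d₀ (fun _ => h d₀)]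
  -- the tail bound
  have htailbound : ‖∑' d, h' d‖ < ε := by
    have h1 : ‖∑' d, h' d‖ ≤ ∑' d, ‖h' d‖ :=
      norm_tsum_le_tsum_norm (Summable.of_nonneg_of_le (fun d => norm_nonneg _)
        hh'bound hgind_summable)
    have h2 : ∑' d, ‖h' d‖ ≤ ∑' d, Set.indicator {d : Fin q →₀ ℕ | d ∉ T} g d :=
      Summable.tsum_le_tsum hh'bound (Summable.of_nonneg_of_le (fun d => norm_nonneg _)
        hh'bound hgind_summable) hgind_summable
    have h3 : ∑' d, Set.indicator {d : Fin q →₀ ℕ | d ∉ T} g d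
        = ∑' d : {d : Fin q →₀ ℕ // d ∉ T}, g d := (tsum_subtype _ g).symm
    calc ‖∑' d, h' d‖ ≤ ∑' d, ‖h' d‖ := h1
      _ ≤ _ := h2
      _ = ∑' d : {d : Fin q →₀ ℕ // d ∉ T}, g d := h3
      _ < ε := hT
  -- conclude
  have hfinal : ‖MvPowerSeries.coeff d₀ F * ∏ i : Fin q, ((x i : ℂ)) ^ d₀ i‖ ≤ μ + ε := by
    have : MvPowerSeries.coeff d₀ F * ∏ i : Fin q, ((x i : ℂ)) ^ d₀ i
        = A - ∑' d, h' d := by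
      rw [hsplit, hhd₀]
      ring
    rw [this]
    calc ‖A - ∑' d, h' d‖ ≤ ‖A‖ + ‖∑' d, h' d‖ := norm_sub_le _ _
      _ ≤ μ + ε := add_le_add hAnorm (le_of_lt htailbound)
  exact le_trans (le_of_eq (hnormeq d₀).symm) hfinal
-- coefficients of the operators
lemma coeff_eulerD (u : PowerSeries ℂ) (j : ℕ) :
    coeff j (eulerD u) = (j : ℂ) * coeff j u := coeff_mk _ _

lemma coeff_eulerD_iter (m : ℕ) (u : PowerSeries ℂ) (j : ℕ) :
    coeff j (eulerD^[m] u) = ((j : ℂ)) ^ m * coeff j u := by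
  induction m with
  | zero => simp
  | succ m ih =>
    rw [Function.iterate_succ_apply', coeff_eulerD, ih, pow_succ]
    ring

lemma coeff_dshift_iter (k : ℕ) (i : ℕ) (u : PowerSeries ℂ) (j : ℕ) :
    coeff j ((dshift k)^[i] u) = ((j : ℂ) + (k : ℂ)) ^ i * coeff j u := by
  induction i with
  | zero => simp
  | succ i ih =>
    rw [Function.iterate_succ_apply', dshift, map_add, coeff_eulerD, map_smul,
      smul_eq_mul, ih, pow_succ]
    ring

lemma coeff_LpolyOp (L : Polynomial ℂ) (k : ℕ) (u : PowerSeries ℂ) (j : ℕ) :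
    coeff j (LpolyOp L k u) = L.eval ((j : ℂ) + (k : ℂ)) * coeff j u := by
  rw [LpolyOp, map_sum]
  have h1 : ∀ i ∈ Finset.range (L.natDegree + 1),
      coeff j (L.coeff i • (dshift k)^[i] u)
        = L.coeff i * ((j : ℂ) + (k : ℂ)) ^ i * coeff j u := by
    intro i _
    rw [map_smul, smul_eq_mul, coeff_dshift_iter]
    ring
  rw [Finset.sum_congr rfl h1, ← Finset.sum_mul]
  congr 1
  rw [Polynomial.eval_eq_sum_range]

-- the substitution as a finite sum over tuples
lemma coeff_substSeries (n : ℕ) (M : MvPowerSeries (Fin (n + 2)) ℂ)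
    (u : Fin (n + 2) → PowerSeries ℂ) (hu : ∀ i, constantCoeff (u i) = 0) (j : ℕ) :
    coeff j (substSeries M u)
      = ∑ gg ∈ Fintype.piFinset (fun _ : Fin (n + 2) => Finset.range (j + 1)),
          MvPowerSeries.coeff (Finsupp.equivFunOnFinite.symm gg) M
            * coeff j (∏ i : Fin (n + 2), (u i) ^ (gg i)) := by
  rw [substSeries, coeff_mk]
  rw [tsum_eq_sum (s := (Fintype.piFinset fun _ : Fin (n + 2) => Finset.range (j + 1)).map
    (Finsupp.equivFunOnFinite.symm.toEmbedding))
    (f := fun d : Fin (n + 2) →₀ ℕ => MvPowerSeries.coeff d M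
      * coeff j (∏ i : Fin (n + 2), (u i) ^ (d i)))]
  · rw [Finset.sum_map]
    refine Finset.sum_congr rfl fun gg _ => ?_
    simp only [Equiv.toEmbedding_apply, Finsupp.coe_equivFunOnFinite_symm]
  · intro d hd
    rw [Finset.mem_map_equiv] at hd
    have : ∃ i, ¬ d i < j + 1 := by
      by_contra hc
      push_neg at hc
      refine hd ?_
      rw [Fintype.mem_piFinset]
      intro i
      rw [Finset.mem_range]
      simp only [Equiv.symm_symm, Finsupp.equivFunOnFinite_apply]
      exact hc i
    obtain ⟨i, hi⟩ := this
    have hlt : j < ∑ i : Fin (n + 2), d i :=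
      lt_of_lt_of_le (by omega)
        (Finset.single_le_sum (fun _ _ => Nat.zero_le _) (Finset.mem_univ i))
    rw [coeff_prod_pow_eq_zero_of_lt Finset.univ u _ (fun i _ => hu i) hlt, mul_zero]

lemma phiArgs_constantCoeff (n : ℕ) (ψ : PowerSeries ℂ)
    (h0 : constantCoeff ψ = 0) (i : Fin (n + 2)) :
    constantCoeff (phiArgs n ψ i) = 0 := by
  rw [phiArgs]
  split
  · exact constantCoeff_X
  · rw [← coeff_zero_eq_constantCoeff, coeff_eulerD_iter]
    rw [← coeff_zero_eq_constantCoeff] at h0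
    rw [h0, mul_zero]
-- the majorant recursion
noncomputable def mtot (n : ℕ) (gg : Fin (n + 2) → ℕ) : ℕ := ∑ i : Fin (n + 1), gg i.succ

noncomputable def Wseq (n : ℕ) (a rr rho : ℝ) : ℕ → PowerSeries ℝ
  | 0 => 0
  | (j + 1) => Wseq n a rr rho j + PowerSeries.monomial (j + 1)
      (a * ∑ gg ∈ Fintype.piFinset (fun _ : Fin (n + 2) => Finset.range (j + 1)),
        rr⁻¹ ^ (gg 0) * rho⁻¹ ^ (mtot n gg)
          * coeff j ((X : PowerSeries ℝ) ^ (gg 0) * (Wseq n a rr rho j) ^ (mtot n gg)))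

noncomputable def useq (n : ℕ) (a rr rho : ℝ) (j : ℕ) : ℝ := coeff j (Wseq n a rr rho j)

lemma Wseq_coeff_zero (n : ℕ) (a rr rho : ℝ) :
    ∀ j i, j < i → coeff i (Wseq n a rr rho j) = 0 := by
  intro j
  induction j with
  | zero => intro i _; rw [Wseq]; simp
  | succ j ih =>
    intro i hi
    rw [Wseq, map_add, ih i (by omega), coeff_monomial, if_neg (by omega), add_zero]

lemma Wseq_coeff_useq (n : ℕ) (a rr rho : ℝ) :
    ∀ j i, i ≤ j → coeff i (Wseq n a rr rho j) = useq n a rr rho i := by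
  intro j
  induction j with
  | zero =>
    intro i hi
    have : i = 0 := by omega
    subst this
    rfl
  | succ j ih =>
    intro i hi
    by_cases hij : i ≤ j
    · rw [Wseq, map_add, coeff_monomial, if_neg (by omega), add_zero]
      exact ih i hij
    · have : i = j + 1 := by omega
      subst this
      rfl

lemma useq_zero (n : ℕ) (a rr rho : ℝ) : useq n a rr rho 0 = 0 := by
  rw [useq, Wseq]
  simp

lemma Useries_coeff (n : ℕ) (a rr rho : ℝ) (i : ℕ) :
    coeff i (PowerSeries.mk (useq n a rr rho)) = useq n a rr rho i := coeff_mk _ _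

lemma useq_rec (n : ℕ) (a rr rho : ℝ) (j : ℕ) :
    useq n a rr rho (j + 1)
      = a * ∑ gg ∈ Fintype.piFinset (fun _ : Fin (n + 2) => Finset.range (j + 1)),
          rr⁻¹ ^ (gg 0) * rho⁻¹ ^ (mtot n gg)
            * coeff j ((X : PowerSeries ℝ) ^ (gg 0)
                * (PowerSeries.mk (useq n a rr rho)) ^ (mtot n gg)) := by
  have h0 : useq n a rr rho (j + 1) = coeff (j+1) (Wseq n a rr rho (j+1)) := rfl
  rw [h0, Wseq, map_add, Wseq_coeff_zero n a rr rho j (j+1) (by omega), zero_add,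
    coeff_monomial, if_pos rfl]
  congr 1
  refine Finset.sum_congr rfl fun gg _ => ?_
  congr 1
  rw [PowerSeries.coeff_X_pow_mul', PowerSeries.coeff_X_pow_mul']
  split
  · rename_i hle
    exact (coeff_pow_congr (l := j - gg 0) (fun i hi => by
      rw [Wseq_coeff_useq n a rr rho j i (by omega), Useries_coeff]) (mtot n gg)
      (j - gg 0) (le_refl _)).symm
  · rfl

lemma useq_nonneg (n : ℕ) (a rr rho : ℝ) (ha : 0 ≤ a) (hrr : 0 ≤ rr) (hrho : 0 ≤ rho) :
    ∀ j, 0 ≤ useq n a rr rho j := by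
  have key : ∀ j i, 0 ≤ coeff i (Wseq n a rr rho j) := by
    intro j
    induction j with
    | zero => intro i; rw [Wseq]; simp
    | succ j ih =>
      intro i
      rw [Wseq, map_add, coeff_monomial]
      refine add_nonneg (ih i) ?_
      split
      · refine mul_nonneg ha (Finset.sum_nonneg fun gg _ => ?_)
        refine mul_nonneg (mul_nonneg (pow_nonneg (inv_nonneg.mpr hrr) _)
          (pow_nonneg (inv_nonneg.mpr hrho) _)) ?_
        exact coeff_mul_nonneg' (coeff_X_pow_nonneg _) (coeff_pow_nonneg' ih _) _
      · exact le_refl 0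
  intro j
  exact key j j
-- ū existence via IVT
lemma ubar_exists (n : ℕ) (a rr rho t : ℝ) (ha : 0 ≤ a) (hrr : 0 < rr) (hrho : 0 < rho)
    (ht : 0 < t) (htr : t < rr)
    (hkey : a * t < rho * ((n + 1 : ℝ) ^ (n + 1) / (n + 2 : ℝ) ^ (n + 2)) * (1 - t / rr)) :
    ∃ ub : ℝ, 0 ≤ ub ∧ ub < rho ∧
      a * t * ((1 - t / rr)⁻¹ * ((1 - ub / rho)⁻¹) ^ (n + 1)) ≤ ub := by
  set gfun : ℝ → ℝ := fun s => s * (1 - s / rho) ^ (n + 1) * (1 - t / rr) with hgdef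
  have hcont : Continuous gfun := by
    refine Continuous.mul (Continuous.mul continuous_id ?_) continuous_const
    exact (continuous_const.sub (continuous_id.div_const rho)).pow _
  have hstar : gfun (rho / (n + 2)) =
      rho * ((n + 1 : ℝ) ^ (n + 1) / (n + 2 : ℝ) ^ (n + 2)) * (1 - t / rr) := by
    rw [hgdef]
    have hn2 : ((n : ℝ) + 2) ≠ 0 := by positivity
    have h1 : (1 - rho / (n + 2) / rho) = ((n : ℝ) + 1) / ((n : ℝ) + 2) := by
      field_simp
      ring
    simp only
    have h2 : ((n : ℝ) + 2) ^ (n + 2) = ((n : ℝ) + 2) ^ (n + 1) * ((n : ℝ) + 2) := by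
      rw [← pow_succ]
    rw [h1, div_pow, h2]
    congr 1
    field_simp
  have hIcc : a * t ∈ Set.Icc (gfun 0) (gfun (rho / (n + 2))) := by
    constructor
    · have : gfun 0 = 0 := by rw [hgdef]; simp
      rw [this]
      positivity
    · rw [hstar]
      exact le_of_lt hkey
  have hsub := intermediate_value_Icc (by positivity : (0:ℝ) ≤ rho / (n + 2))
    hcont.continuousOn
  obtain ⟨ub, hubmem, hubeq⟩ := hsub hIcc
  obtain ⟨hub0, hub1⟩ := hubmem
  have hubρ : ub < rho := by
    have h2 : rho / (n + 2) < rho := by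
      rw [div_lt_iff₀ (by positivity)]
      nlinarith
    linarith
  refine ⟨ub, hub0, hubρ, ?_⟩
  have h3 : (0:ℝ) < 1 - t / rr := by
    rw [sub_pos, div_lt_one hrr]
    exact htr
  have h4 : (0:ℝ) < 1 - ub / rho := by
    rw [sub_pos, div_lt_one hrho]
    exact hubρ
  have h5 : a * t = ub * (1 - ub / rho) ^ (n + 1) * (1 - t / rr) := hubeq.symm
  have h6 : (0:ℝ) < (1 - ub / rho) ^ (n + 1) := by positivity
  rw [h5, inv_pow]
  have h7 : ub * (1 - ub / rho) ^ (n + 1) * (1 - t / rr)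
      * ((1 - t / rr)⁻¹ * ((1 - ub / rho) ^ (n + 1))⁻¹)
      = ub * ((1 - ub / rho) ^ (n + 1) * ((1 - ub / rho) ^ (n + 1))⁻¹)
        * ((1 - t / rr) * (1 - t / rr)⁻¹) := by ring
  rw [h7, mul_inv_cancel₀ h6.ne', mul_inv_cancel₀ h3.ne', mul_one, mul_one]

lemma useq_sum_le (n : ℕ) (a rr rho t ub : ℝ)
    (ha : 0 ≤ a) (hrr : 0 < rr) (hrho : 0 < rho) (ht : 0 ≤ t) (htr : t < rr)
    (hub0 : 0 ≤ ub) (hubρ : ub < rho)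
    (hfix : a * t * ((1 - t / rr)⁻¹ * ((1 - ub / rho)⁻¹) ^ (n + 1)) ≤ ub) :
    ∀ J, ∑ j ∈ Finset.range J, useq n a rr rho j * t ^ j ≤ ub := by
  classical
  set U : PowerSeries ℝ := PowerSeries.mk (useq n a rr rho) with hUdef
  have hUnn : ∀ i, 0 ≤ coeff i U := by
    intro i
    rw [hUdef, coeff_mk]
    exact useq_nonneg n a rr rho ha hrr.le hrho.le i
  have hU0 : constantCoeff U = 0 := by
    rw [← coeff_zero_eq_constantCoeff, hUdef, coeff_mk]
    exact useq_zero n a rr rho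
  intro J
  induction J with
  | zero => simpa using hub0
  | succ J IH =>
    rw [Finset.sum_range_succ', useq_zero, zero_mul, add_zero]
    set GG : Finset (Fin (n + 2) → ℕ) :=
      Fintype.piFinset (fun _ : Fin (n + 2) => Finset.range (J + 1)) with hGGdef
    have hext : ∀ j, j < J → useq n a rr rho (j + 1)
        = a * ∑ gg ∈ GG, rr⁻¹ ^ (gg 0) * rho⁻¹ ^ (mtot n gg)
            * coeff j ((X : PowerSeries ℝ) ^ (gg 0) * U ^ (mtot n gg)) := by
      intro j hj
      rw [useq_rec]
      congr 1
      refine Finset.sum_subset ?_ ?_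
      · intro gg hgg
        rw [Fintype.mem_piFinset] at hgg ⊢
        intro i
        have := hgg i
        rw [Finset.mem_range] at this ⊢
        omega
      · intro gg _ hnot
        have hex : ∃ i, ¬ gg i < j + 1 := by
          by_contra hc
          push_neg at hc
          refine hnot ?_
          rw [Fintype.mem_piFinset]
          intro i
          rw [Finset.mem_range]
          exact hc i
        obtain ⟨i, hi⟩ := hex
        have hz : coeff j ((X : PowerSeries ℝ) ^ (gg 0) * U ^ (mtot n gg)) = 0 := by
          rw [PowerSeries.coeff_X_pow_mul']
          by_cases hI : i = (0 : Fin (n + 2))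
          · subst hI
            rw [if_neg (by omega)]
          · obtain ⟨i', rfl⟩ := Fin.eq_succ_of_ne_zero hI
            have hm1 : gg i'.succ ≤ mtot n gg := by
              rw [mtot]
              exact Finset.single_le_sum (f := fun i : Fin (n + 1) => gg i.succ)
                (fun _ _ => Nat.zero_le _) (Finset.mem_univ i')
            have hm : j + 1 ≤ mtot n gg := le_trans (by omega) hm1
            split
            · exact coeff_pow_eq_zero_of_lt hU0 (by omega)
            · rfl
        rw [hz, mul_zero]
    have hstep : ∑ j ∈ Finset.range J, useq n a rr rho (j + 1) * t ^ (j + 1)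
        = a * t * ∑ gg ∈ GG, rr⁻¹ ^ (gg 0) * rho⁻¹ ^ (mtot n gg)
            * ∑ j ∈ Finset.range J,
                coeff j ((X : PowerSeries ℝ) ^ (gg 0) * U ^ (mtot n gg)) * t ^ j := by
      calc ∑ j ∈ Finset.range J, useq n a rr rho (j + 1) * t ^ (j + 1)
          = ∑ j ∈ Finset.range J, ∑ gg ∈ GG, a * t * (rr⁻¹ ^ (gg 0) * rho⁻¹ ^ (mtot n gg)
              * (coeff j ((X : PowerSeries ℝ) ^ (gg 0) * U ^ (mtot n gg)) * t ^ j)) := by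
            refine Finset.sum_congr rfl fun j hj => ?_
            rw [hext j (Finset.mem_range.mp hj), Finset.mul_sum, Finset.sum_mul]
            refine Finset.sum_congr rfl fun gg _ => ?_
            rw [pow_succ]
            ring
        _ = ∑ gg ∈ GG, ∑ j ∈ Finset.range J, a * t * (rr⁻¹ ^ (gg 0) * rho⁻¹ ^ (mtot n gg)
              * (coeff j ((X : PowerSeries ℝ) ^ (gg 0) * U ^ (mtot n gg)) * t ^ j)) :=
            Finset.sum_comm
        _ = _ := by
            rw [Finset.mul_sum]
            refine Finset.sum_congr rfl fun gg _ => ?_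
            rw [← Finset.mul_sum, ← Finset.mul_sum]
    rw [hstep]
    have hSnn : (0:ℝ) ≤ ∑ j ∈ Finset.range J, useq n a rr rho j * t ^ j :=
      Finset.sum_nonneg fun j _ => mul_nonneg
        (useq_nonneg n a rr rho ha hrr.le hrho.le j) (pow_nonneg ht j)
    have hBgg : ∀ gg ∈ GG,
        ∑ j ∈ Finset.range J, coeff j ((X : PowerSeries ℝ) ^ (gg 0) * U ^ (mtot n gg)) * t ^ j
          ≤ t ^ (gg 0) * ub ^ (mtot n gg) := by
      intro gg _
      have h1 := sum_coeff_mul_le ((X : PowerSeries ℝ) ^ (gg 0)) (U ^ (mtot n gg))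
        (coeff_X_pow_nonneg _) (coeff_pow_nonneg' hUnn _) t ht J
      have h2 := sum_coeff_X_pow_le (gg 0) t ht J
      have h3 := sum_coeff_pow_le U hUnn t ht J (mtot n gg)
      have h4 : ∑ j ∈ Finset.range J, coeff j U * t ^ j
          = ∑ j ∈ Finset.range J, useq n a rr rho j * t ^ j :=
        Finset.sum_congr rfl fun j _ => by rw [hUdef, coeff_mk]
      have h5 : (∑ j ∈ Finset.range J, coeff j U * t ^ j) ^ (mtot n gg)
          ≤ ub ^ (mtot n gg) := by
        rw [h4]
        exact pow_le_pow_left₀ hSnn IH _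
      refine h1.trans ?_
      refine mul_le_mul h2 (h3.trans h5) ?_ (pow_nonneg ht _)
      exact Finset.sum_nonneg fun j _ => mul_nonneg (coeff_pow_nonneg' hUnn _ _)
        (pow_nonneg ht j)
    set h : (i : Fin (n + 2)) → ℕ → ℝ :=
      Fin.cases (fun v => (t / rr) ^ v) (fun _ v => (ub / rho) ^ v) with hhdef
    have hpt : ∀ gg : Fin (n + 2) → ℕ,
        rr⁻¹ ^ (gg 0) * rho⁻¹ ^ (mtot n gg) * (t ^ (gg 0) * ub ^ (mtot n gg))
          = ∏ i : Fin (n + 2), h i (gg i) := by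
      intro gg
      rw [Fin.prod_univ_succ]
      simp only [hhdef, Fin.cases_zero, Fin.cases_succ]
      have e2 : ∏ i : Fin (n + 1), (ub / rho) ^ (gg i.succ) = (ub / rho) ^ (mtot n gg) := by
        rw [Finset.prod_pow_eq_pow_sum, mtot]
      rw [e2, div_eq_mul_inv, div_eq_mul_inv, mul_pow, mul_pow, inv_pow, inv_pow]
      ring
    have hgeom1 : ∑ v ∈ Finset.range (J + 1), (t / rr) ^ v ≤ (1 - t / rr)⁻¹ :=
      geom_partial_le (div_nonneg ht hrr.le) ((div_lt_one hrr).mpr htr) _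
    have hgeom2 : ∑ v ∈ Finset.range (J + 1), (ub / rho) ^ v ≤ (1 - ub / rho)⁻¹ :=
      geom_partial_le (div_nonneg hub0 hrho.le) ((div_lt_one hrho).mpr hubρ) _
    have hg1nn : (0:ℝ) ≤ ∑ v ∈ Finset.range (J + 1), (t / rr) ^ v :=
      Finset.sum_nonneg fun v _ => pow_nonneg (div_nonneg ht hrr.le) v
    have hg2nn : (0:ℝ) ≤ ∑ v ∈ Finset.range (J + 1), (ub / rho) ^ v :=
      Finset.sum_nonneg fun v _ => pow_nonneg (div_nonneg hub0 hrho.le) v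
    calc a * t * ∑ gg ∈ GG, rr⁻¹ ^ (gg 0) * rho⁻¹ ^ (mtot n gg)
            * ∑ j ∈ Finset.range J,
                coeff j ((X : PowerSeries ℝ) ^ (gg 0) * U ^ (mtot n gg)) * t ^ j
        ≤ a * t * ∑ gg ∈ GG, rr⁻¹ ^ (gg 0) * rho⁻¹ ^ (mtot n gg)
            * (t ^ (gg 0) * ub ^ (mtot n gg)) := by
          refine mul_le_mul_of_nonneg_left (Finset.sum_le_sum fun gg hgg => ?_)
            (mul_nonneg ha ht)
          refine mul_le_mul_of_nonneg_left (hBgg gg hgg) ?_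
          exact mul_nonneg (pow_nonneg (inv_nonneg.mpr hrr.le) _)
            (pow_nonneg (inv_nonneg.mpr hrho.le) _)
      _ = a * t * ∏ i : Fin (n + 2), ∑ v ∈ Finset.range (J + 1), h i v := by
          rw [Finset.sum_congr rfl fun gg _ => hpt gg, ← Finset.prod_univ_sum]
      _ ≤ a * t * ((1 - t / rr)⁻¹ * ((1 - ub / rho)⁻¹) ^ (n + 1)) := by
          refine mul_le_mul_of_nonneg_left ?_ (mul_nonneg ha ht)
          rw [Fin.prod_univ_succ]
          simp only [hhdef, Fin.cases_zero, Fin.cases_succ]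
          rw [Finset.prod_const, Finset.card_univ, Fintype.card_fin]
          refine mul_le_mul hgeom1 (pow_le_pow_left₀ hg2nn hgeom2 _) ?_ ?_
          · exact pow_nonneg hg2nn _
          · have : (0:ℝ) < 1 - t / rr := by
              rw [sub_pos, div_lt_one hrr]; exact htr
            positivity
      _ ≤ ub := hfix

end Aux

/-- **Proposition 1**: if `M` is holomorphic in a neighbourhood of the closed polydisk
`Δ̄ = {|z| ≤ r, |y₀| ≤ ρ, …, |y_n| ≤ ρ}` and `μ = max_Δ̄ |M|`, then the formal solution
`ψ̂` of `L̄(δ+k)ψ̂ = z·M(z, ψ̂, δψ̂, …, δⁿψ̂)` converges in the disk of radius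
`R = rρ/(ρ + μr/(σN))`, `N = (n+1)^{n+1}/(n+2)^{n+2}`. -/
theorem radius_estimate (n : ℕ) (hn : 1 ≤ n)
    (L : Polynomial ℂ) (hdeg : L.degree = (n : ℕ)) (k : ℕ)
    (hLk : ∀ j : ℕ, 1 ≤ j → L.eval ((j + k : ℕ) : ℂ) ≠ 0)
    (σ : ℝ)
    (hσ : σ = ⨅ j : ℕ, ‖L.eval ((j + 1 + k : ℕ) : ℂ)‖ / ((j + 1 : ℕ) : ℝ) ^ n)
    (r ρ μ : ℝ) (hr : 0 < r) (hρ : 0 < ρ)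
    (M : MvPowerSeries (Fin (n + 2)) ℂ)
    (hM : ∃ r' ρ' : ℝ, r < r' ∧ ρ < ρ' ∧
      Summable fun d : Fin (n + 2) →₀ ℕ =>
        ‖MvPowerSeries.coeff d M‖ * r' ^ (d 0) * ρ' ^ (∑ i : Fin (n + 1), d i.succ))
    (hμ : IsGreatest {t : ℝ | ∃ x : Fin (n + 2) → ℂ, ‖x 0‖ ≤ r ∧
      (∀ i : Fin (n + 1), ‖x i.succ‖ ≤ ρ) ∧ t = ‖evalMv M x‖} μ)
    (ψhat : PowerSeries ℂ) (hψhat0 : PowerSeries.constantCoeff ψhat = 0)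
    (hψhat : LpolyOp L k ψhat = PowerSeries.X * substSeries M (phiArgs n ψhat)) :
    ∀ t : ℝ, 0 < t →
      t < r * ρ / (ρ + μ * r / (σ * ((n + 1 : ℝ) ^ (n + 1) / (n + 2 : ℝ) ^ (n + 2)))) →
      Summable fun j : ℕ => ‖PowerSeries.coeff j ψhat‖ * t ^ j := by
  classical
  intro t ht htR
  obtain ⟨hσpos, hσle⟩ := sigma_pos n L hdeg k hLk σ hσ
  set NN : ℝ := (n + 1 : ℝ) ^ (n + 1) / (n + 2 : ℝ) ^ (n + 2) with hNNdef
  have hNNpos : 0 < NN := by positivity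
  -- μ is nonnegative
  have hμ0 : 0 ≤ μ := by
    obtain ⟨x₀, _, _, hx3⟩ := hμ.1
    rw [hx3]
    exact norm_nonneg _
  -- consequences of t < R
  have hσN : (0:ℝ) < σ * NN := mul_pos hσpos hNNpos
  have hE : 0 ≤ μ * r / (σ * NN) := div_nonneg (mul_nonneg hμ0 hr.le) hσN.le
  have hD : 0 < ρ + μ * r / (σ * NN) := by linarith
  have htD : t * (ρ + μ * r / (σ * NN)) < r * ρ := (lt_div_iff₀ hD).mp htR
  have htr : t < r := by nlinarith [mul_nonneg ht.le hE]
  have hkey : μ / σ * t < ρ * NN * (1 - t / r) := by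
    have h1 : t * (μ * r / (σ * NN)) < ρ * (r - t) := by nlinarith [htD]
    have h2 : t * (μ * r) < ρ * (r - t) * (σ * NN) := by
      have h3 : t * (μ * r / (σ * NN)) = t * (μ * r) / (σ * NN) := by ring
      rw [h3, div_lt_iff₀ hσN] at h1
      linarith
    rw [div_mul_eq_mul_div, div_lt_iff₀ hσpos]
    have h4 : (1:ℝ) - t / r = (r - t) / r := by field_simp
    rw [h4, show ρ * NN * ((r - t) / r) * σ = ρ * (r - t) * (σ * NN) / r by ring,
      lt_div_iff₀ hr]
    nlinarith [h2]
  -- Cauchy estimates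
  set x : Fin (n + 2) → ℝ := fun i => if i = 0 then r else ρ with hxdef
  have hx : ∀ i, 0 ≤ x i := by
    intro i
    simp only [hxdef]
    split
    · exact hr.le
    · exact hρ.le
  have hxprod : ∀ d : Fin (n + 2) →₀ ℕ,
      ∏ i : Fin (n + 2), x i ^ d i = r ^ (d 0) * ρ ^ (∑ i : Fin (n + 1), d i.succ) := by
    intro d
    rw [Fin.prod_univ_succ]
    have h0 : x 0 ^ d 0 = r ^ d 0 := by simp [hxdef]
    have hs : ∀ i : Fin (n + 1), x i.succ ^ d i.succ = ρ ^ d i.succ := by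
      intro i; simp only [hxdef]; rw [if_neg (Fin.succ_ne_zero i)]
    rw [h0, Finset.prod_congr rfl fun i _ => hs i, Finset.prod_pow_eq_pow_sum]
  have hsumx : Summable fun d : Fin (n + 2) →₀ ℕ =>
      ‖MvPowerSeries.coeff d M‖ * ∏ i : Fin (n + 2), x i ^ d i := by
    obtain ⟨r', ρ', hr', hρ', hsum'⟩ := hM
    have hr'pos : (0:ℝ) < r' := hr.trans hr'
    have hρ'pos : (0:ℝ) < ρ' := hρ.trans hρ'
    refine Summable.of_nonneg_of_le (fun d => mul_nonneg (norm_nonneg _)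
      (Finset.prod_nonneg fun i _ => pow_nonneg (hx i) _)) (fun d => ?_) hsum'
    rw [hxprod d, ← mul_assoc]
    refine mul_le_mul ?_ ?_ (by positivity) ?_
    · exact mul_le_mul_of_nonneg_left (pow_le_pow_left₀ hr.le hr'.le _) (norm_nonneg _)
    · exact pow_le_pow_left₀ hρ.le hρ'.le _
    · exact mul_nonneg (norm_nonneg _) (pow_nonneg hr'pos.le _)
  have hb : ∀ y : Fin (n + 2) → ℂ, (∀ i, ‖y i‖ ≤ x i) → ‖evalMv M y‖ ≤ μ := by
    intro y hy
    refine hμ.2 ⟨y, ?_, ?_, rfl⟩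
    · have := hy 0
      simp only [hxdef] at this
      simpa using this
    · intro i
      have := hy i.succ
      simp only [hxdef, Fin.succ_ne_zero, if_false] at this
      exact this
  have hC : ∀ d : Fin (n + 2) →₀ ℕ,
      ‖MvPowerSeries.coeff d M‖ * ∏ i : Fin (n + 2), x i ^ d i ≤ μ :=
    fun d => cauchy_estimate M x hx hsumx μ hb d
  -- the majorant data
  set a : ℝ := μ / σ with hadef
  have ha : 0 ≤ a := div_nonneg hμ0 hσpos.le
  obtain ⟨ub, hub0, hubρ, hfix⟩ := ubar_exists n a r ρ t ha hr hρ ht htr (by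
    rw [hadef]; exact hkey)
  have hpartial := useq_sum_le n a r ρ t ub ha hr hρ ht.le htr hub0 hubρ hfix
  set U : PowerSeries ℝ := PowerSeries.mk (useq n a r ρ) with hUdef
  -- Cauchy in inverse-power form
  have hC' : ∀ gg : Fin (n + 2) → ℕ,
      ‖MvPowerSeries.coeff (Finsupp.equivFunOnFinite.symm gg) M‖
        ≤ μ * r⁻¹ ^ (gg 0) * ρ⁻¹ ^ (mtot n gg) := by
    intro gg
    set d : Fin (n + 2) →₀ ℕ := Finsupp.equivFunOnFinite.symm gg with hddef
    have hdi : ∀ i, d i = gg i := fun i => congrFun (Finsupp.coe_equivFunOnFinite_symm gg) i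
    have h1 := hC d
    rw [hxprod d] at h1
    have h2 : (∑ i : Fin (n + 1), d i.succ) = mtot n gg := by
      rw [mtot]
      exact Finset.sum_congr rfl fun i _ => hdi i.succ
    rw [h2, hdi 0] at h1
    have hpos : (0:ℝ) < r ^ (gg 0) * ρ ^ (mtot n gg) := by positivity
    rw [inv_pow, inv_pow, mul_assoc, ← mul_inv]
    have h3 : ‖MvPowerSeries.coeff d M‖ ≤ μ / (r ^ (gg 0) * ρ ^ (mtot n gg)) :=
      (le_div_iff₀ hpos).mpr h1
    rwa [div_eq_mul_inv] at h3
  -- main induction: jⁿ‖c_j‖ ≤ u_j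
  have hmaj : ∀ j : ℕ, ((j:ℝ)) ^ n * ‖PowerSeries.coeff j ψhat‖ ≤ useq n a r ρ j := by
    intro j
    induction j using Nat.strong_induction_on with
    | _ j IH =>
      rcases j with _ | j'
      · rw [PowerSeries.coeff_zero_eq_constantCoeff, hψhat0, norm_zero, mul_zero]
        rw [useq_zero]
      · -- the coefficient recursion
        have hcast : ((j' + 1 + k : ℕ) : ℂ) = ((j' + 1 : ℕ) : ℂ) + (k : ℂ) := by push_cast; ring
        have key1 : PowerSeries.coeff (j' + 1) (LpolyOp L k ψhat)
            = L.eval (((j' + 1 : ℕ) : ℂ) + (k : ℂ)) * PowerSeries.coeff (j' + 1) ψhat :=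
          coeff_LpolyOp L k ψhat (j' + 1)
        have key2 : PowerSeries.coeff (j' + 1) (LpolyOp L k ψhat)
            = PowerSeries.coeff j' (substSeries M (phiArgs n ψhat)) := by
          rw [hψhat, PowerSeries.coeff_succ_X_mul]
        have key3 := coeff_substSeries n M (phiArgs n ψhat)
          (phiArgs_constantCoeff n ψhat hψhat0) j'
        -- the majorant bound for the products
        have hprodmaj : ∀ gg ∈ Fintype.piFinset (fun _ : Fin (n + 2) => Finset.range (j' + 1)),
            ‖PowerSeries.coeff j' (∏ i : Fin (n + 2), (phiArgs n ψhat i) ^ (gg i))‖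
              ≤ PowerSeries.coeff j' ((PowerSeries.X : PowerSeries ℝ) ^ (gg 0)
                  * U ^ (mtot n gg)) := by
          intro gg _
          have hbase : ∀ i : Fin (n + 2), ∀ l, l ≤ j' →
              ‖PowerSeries.coeff l (phiArgs n ψhat i)‖
                ≤ PowerSeries.coeff l
                    (if i = (0 : Fin (n + 2)) then (PowerSeries.X : PowerSeries ℝ) else U) := by
            intro i l hl
            by_cases hI : i = 0
            · subst hI
              rw [if_pos rfl, phiArgs]
              rw [if_pos (Fin.val_zero (n + 2) : ((0 : Fin (n + 2)) : ℕ) = 0)]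
              rw [PowerSeries.coeff_X, PowerSeries.coeff_X]
              split <;> simp
            · rw [if_neg hI, phiArgs, if_neg (fun hc => hI (Fin.ext (by simpa using hc)))]
              rw [coeff_eulerD_iter, norm_mul, norm_pow, Complex.norm_natCast]
              rw [hUdef, coeff_mk]
              rcases Nat.eq_zero_or_pos l with hl0 | hl0
              · subst hl0
                rw [PowerSeries.coeff_zero_eq_constantCoeff, hψhat0, norm_zero, mul_zero]
                exact useq_nonneg n a r ρ ha hr.le hρ.le 0
              · have h1 : ((l:ℝ)) ^ ((i : ℕ) - 1) ≤ ((l:ℝ)) ^ n := by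
                  refine pow_le_pow_right₀ (by exact_mod_cast hl0) ?_
                  have := i.isLt
                  omega
                calc ((l:ℝ)) ^ ((i : ℕ) - 1) * ‖PowerSeries.coeff l ψhat‖
                    ≤ ((l:ℝ)) ^ n * ‖PowerSeries.coeff l ψhat‖ :=
                      mul_le_mul_of_nonneg_right h1 (norm_nonneg _)
                  _ ≤ useq n a r ρ l := IH l (by omega)
          have hP := maj_coeff_prod (l := j') Finset.univ
            (fun i => (phiArgs n ψhat i) ^ (gg i))
            (fun i => (if i = (0 : Fin (n + 2)) then (PowerSeries.X : PowerSeries ℝ) else U)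
              ^ (gg i))
            (fun i _ => maj_coeff_pow (hbase i) (gg i)) j' (le_refl _)
          refine hP.trans (le_of_eq ?_)
          congr 1
          rw [Fin.prod_univ_succ]
          rw [if_pos rfl]
          congr 1
          rw [mtot, ← Finset.prod_pow_eq_pow_sum]
          refine Finset.prod_congr rfl fun i _ => ?_
          rw [if_neg (Fin.succ_ne_zero i)]
        -- assemble the chain
        have hnorm1 : σ * (((j' + 1 : ℕ) : ℝ)) ^ n * ‖PowerSeries.coeff (j' + 1) ψhat‖
            ≤ ‖PowerSeries.coeff j' (substSeries M (phiArgs n ψhat))‖ := by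
          have h1 := hσle (j' + 1) (by omega)
          have h2 : σ * (((j' + 1 : ℕ) : ℝ)) ^ n * ‖PowerSeries.coeff (j' + 1) ψhat‖
              ≤ ‖L.eval ((j' + 1 + k : ℕ) : ℂ)‖ * ‖PowerSeries.coeff (j' + 1) ψhat‖ :=
            mul_le_mul_of_nonneg_right h1 (norm_nonneg _)
          refine h2.trans (le_of_eq ?_)
          rw [← norm_mul, hcast, ← key1, key2]
        have hsumbound : ‖PowerSeries.coeff j' (substSeries M (phiArgs n ψhat))‖
            ≤ ∑ gg ∈ Fintype.piFinset (fun _ : Fin (n + 2) => Finset.range (j' + 1)),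
                (μ * r⁻¹ ^ (gg 0) * ρ⁻¹ ^ (mtot n gg))
                  * PowerSeries.coeff j' ((PowerSeries.X : PowerSeries ℝ) ^ (gg 0)
                      * U ^ (mtot n gg)) := by
          rw [key3]
          refine (norm_sum_le _ _).trans ?_
          refine Finset.sum_le_sum fun gg hgg => ?_
          rw [norm_mul]
          refine mul_le_mul (hC' gg) (hprodmaj gg hgg) (norm_nonneg _) ?_
          positivity
        have hid : ∑ gg ∈ Fintype.piFinset (fun _ : Fin (n + 2) => Finset.range (j' + 1)),
            (μ * r⁻¹ ^ (gg 0) * ρ⁻¹ ^ (mtot n gg))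
              * PowerSeries.coeff j' ((PowerSeries.X : PowerSeries ℝ) ^ (gg 0)
                  * U ^ (mtot n gg))
            = σ * useq n a r ρ (j' + 1) := by
          rw [useq_rec, ← hUdef]
          rw [Finset.mul_sum, Finset.mul_sum]
          refine Finset.sum_congr rfl fun gg _ => ?_
          have hσa : σ * a = μ := by
            rw [hadef, mul_div_cancel₀]
            exact hσpos.ne'
          rw [← hσa]
          ring
        have hfinal : σ * ((((j' + 1 : ℕ)) : ℝ) ^ n * ‖PowerSeries.coeff (j' + 1) ψhat‖)
            ≤ σ * useq n a r ρ (j' + 1) := by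
          rw [← hid]
          rw [← mul_assoc]
          exact hnorm1.trans hsumbound
        have := le_of_mul_le_mul_left hfinal hσpos
        exact_mod_cast this
  -- conclude summability
  have husum : Summable fun j : ℕ => useq n a r ρ j * t ^ j := by
    refine summable_of_sum_range_le (c := ub) (fun j => mul_nonneg
      (useq_nonneg n a r ρ ha hr.le hρ.le j) (pow_nonneg ht.le j)) hpartial
  refine Summable.of_nonneg_of_le (fun j => mul_nonneg (norm_nonneg _) (pow_nonneg ht.le j))
    (fun j => ?_) husum
  refine mul_le_mul_of_nonneg_right ?_ (pow_nonneg ht.le j)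
  rcases Nat.eq_zero_or_pos j with hj0 | hj0
  · subst hj0
    rw [PowerSeries.coeff_zero_eq_constantCoeff, hψhat0, norm_zero]
    exact useq_nonneg n a r ρ ha hr.le hρ.le 0
  · refine le_trans ?_ (hmaj j)
    refine le_mul_of_one_le_left (norm_nonneg _) ?_
    calc (1:ℝ) = 1 ^ n := (one_pow n).symm
      _ ≤ ((j:ℝ)) ^ n := pow_le_pow_left₀ zero_le_one (by exact_mod_cast hj0) n
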